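/- Let t > 1 be an integer coprime to m, and let d ≥ 1 be an integer such that Σ_{e=1}^d (e−1)·|B_{e,L}| < q^t − q^{t/2+1} (as real numbers). Then there exists a monic irreducible polynomial g of degree t over F such that g has no roots in GF(q^m) and g ∉ G(d,t,L); in particular, every nonzero codeword of C(g^{−1},t) has degree > d. -/
import Mathlib


open Polynomial

noncomputable section

/-- The orbit of `j : ZMod N` under multiplication by `q`. -/
def qOrbit (N q : ℕ) (j : ZMod N) : Set (ZMod N) :=
  Set.range fun k : ℕ => (q : ZMod N) ^ k * j

/-- The set `L` of orbits of `ZMod N` under multiplication by `q`. -/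
def orbitSet (N q : ℕ) : Set (Set (ZMod N)) :=
  {l | ∃ j : ZMod N, l = qOrbit N q j}

/-- `β ^ j` for a residue class `j`. -/
def bpow {E : Type*} [Monoid E] {N : ℕ} (β : E) (j : ZMod N) : E :=
  β ^ j.val

/-- The check-matrix entry `h_{i l} = ∑_{j ∈ l} ρ(β^j) β^{i j}`, as an element of `E`. -/
def hEntry {F E : Type*} [CommSemiring F] [CommSemiring E] [Algebra F E] {N : ℕ}
    (β : E) (ρ : Polynomial F) (i : ℕ) (l : Set (ZMod N)) : E :=
  ∑ᶠ j ∈ l, Polynomial.aeval (bpow β j) ρ * bpow β j ^ i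

/-- The code `C(ρ, t)` inside `F^L`. -/
def codeSet (F E : Type*) [Field F] [Field E] [Algebra F E] (N q : ℕ)
    (β : E) (ρ : Polynomial F) (t : ℕ) : Set (↥(orbitSet N q) → F) :=
  {c | ∀ i < t, ∑ᶠ l : orbitSet N q,
    algebraMap F E (c l) * hEntry β ρ i (l : Set (ZMod N)) = 0}

open scoped Classical in
/-- `deg c = ∑_{l : c_l ≠ 0} |l|`. -/
def wdeg {F : Type*} [Zero F] {N q : ℕ} (c : ↥(orbitSet N q) → F) : ℕ :=
  ∑ᶠ l : orbitSet N q, if c l ≠ 0 then (l : Set (ZMod N)).ncard else 0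

/-- The set `B_{d,L}` of words of degree `d`. -/
def Bset (F : Type*) [Field F] (N q d : ℕ) : Set (↥(orbitSet N q) → F) :=
  {r | wdeg r = d}

/-- The set `G_{d,t,L}` of monic irreducible polynomials `g` of degree `t` over `F` having
no roots in `E` such that `C(g⁻¹, t)` contains a word of `B_{d,L}`. -/
def Gset (F E : Type*) [Field F] [Field E] [Algebra F E] (N q : ℕ) (β : E)
    (d t : ℕ) : Set (Polynomial F) :=
  {g | g.Monic ∧ Irreducible g ∧ g.natDegree = t ∧
    (∀ x : E, Polynomial.aeval x g ≠ 0) ∧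
    ∃ ginv : Polynomial F, ginv.degree < (N : WithBot ℕ) ∧
      ((X : Polynomial F) ^ N - 1 ∣ g * ginv - 1) ∧
      ∃ r ∈ Bset F N q d, r ∈ codeSet F E N q β ginv t}

namespace GoppaAux

open Finset
open scoped Classical

variable {N q m : ℕ}

lemma mem_qOrbit_self (N q : ℕ) (j : ZMod N) : j ∈ qOrbit N q j :=
  ⟨0, by simp⟩

lemma qOrbit_eq_of_mem (hm : 0 < m) (hq : (q : ZMod N) ^ m = 1)
    {x j : ZMod N} (hx : x ∈ qOrbit N q j) : qOrbit N q x = qOrbit N q j := by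
  obtain ⟨k, rfl⟩ := hx
  ext y
  constructor
  · rintro ⟨a, rfl⟩
    exact ⟨a + k, by simp only [pow_add, mul_assoc]⟩
  · rintro ⟨a, rfl⟩
    refine ⟨a + k * (m - 1), ?_⟩
    have h1 : a + k * (m - 1) + k = a + k * m := by
      have : m - 1 + 1 = m := Nat.succ_pred_eq_of_pos hm
      calc a + k * (m - 1) + k = a + k * (m - 1 + 1) := by ring
        _ = a + k * m := by rw [this]
    calc (q : ZMod N) ^ (a + k * (m - 1)) * ((q : ZMod N) ^ k * j)
        = (q : ZMod N) ^ (a + k * (m - 1) + k) * j := by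
          simp only [pow_add, mul_assoc]
      _ = (q : ZMod N) ^ (a + k * m) * j := by rw [h1]
      _ = (q : ZMod N) ^ a * ((q : ZMod N) ^ m) ^ k * j := by
          rw [pow_add, mul_comm k m, pow_mul]
      _ = (q : ZMod N) ^ a * j := by rw [hq, one_pow, mul_one]

/-- The orbit of `j`, as an element of the subtype `orbitSet N q`. -/
def cls (N q : ℕ) (j : ZMod N) : ↥(orbitSet N q) := ⟨qOrbit N q j, j, rfl⟩

lemma mem_iff_cls_eq (hm : 0 < m) (hq : (q : ZMod N) ^ m = 1)
    {l : ↥(orbitSet N q)} {j : ZMod N} :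
    j ∈ (l : Set (ZMod N)) ↔ cls N q j = l := by
  constructor
  · intro hj
    obtain ⟨j0, hl⟩ := l.2
    apply Subtype.ext
    show qOrbit N q j = (l : Set (ZMod N))
    have hj' : j ∈ qOrbit N q j0 := by rw [← hl]; exact hj
    rw [hl]
    exact qOrbit_eq_of_mem hm hq hj'
  · rintro rfl
    exact mem_qOrbit_self N q j

variable {F : Type*} [Field F]

/-- The support of a codeword, as a subset of `ZMod N`. -/
def Supp [NeZero N] (c : ↥(orbitSet N q) → F) : Finset (ZMod N) :=
  Finset.univ.filter fun j => c (cls N q j) ≠ 0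

lemma fiber_eq [NeZero N] (hm : 0 < m) (hq : (q : ZMod N) ^ m = 1)
    (l : ↥(orbitSet N q)) :
    (l : Set (ZMod N)) = ↑(Finset.univ.filter fun j => cls N q j = l) := by
  ext x
  simp [mem_iff_cls_eq hm hq]

lemma card_Supp [NeZero N] (hm : 0 < m) (hq : (q : ZMod N) ^ m = 1)
    (c : ↥(orbitSet N q) → F) : (Supp c).card = wdeg c := by
  haveI : Fintype ↥(orbitSet N q) := (Set.toFinite _).fintype
  unfold wdeg
  rw [finsum_eq_sum_of_fintype]
  rw [Finset.card_eq_sum_card_fiberwise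
    (f := cls N q) (t := Finset.univ) (fun x _ => Finset.mem_univ _)]
  refine Finset.sum_congr rfl fun l _ => ?_
  by_cases hcl : c l ≠ 0
  · rw [if_pos hcl]
    have h1 : (Supp c).filter (fun j => cls N q j = l)
        = Finset.univ.filter fun j => cls N q j = l := by
      ext j
      simp only [Supp, Finset.mem_filter, Finset.mem_univ, true_and]
      exact ⟨fun h => h.2, fun h => ⟨by rw [h]; exact hcl, h⟩⟩
    rw [h1, fiber_eq hm hq l, Set.ncard_coe_finset]
  · rw [if_neg hcl]
    push_neg at hcl
    rw [Finset.card_eq_zero, Finset.filter_eq_empty_iff]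
    intro j hj
    intro hc
    have := (Finset.mem_filter.mp hj).2
    rw [hc] at this
    exact this hcl

variable {E : Type*} [Field E] [Algebra F E]

lemma syndrome [NeZero N] (hm : 0 < m) (hq : (q : ZMod N) ^ m = 1)
    (β : E) (ρ : Polynomial F) (t : ℕ)
    {c : ↥(orbitSet N q) → F} (hc : c ∈ codeSet F E N q β ρ t)
    {i : ℕ} (hi : i < t) :
    ∑ j : ZMod N, algebraMap F E (c (cls N q j)) *
      (Polynomial.aeval (bpow β j) ρ * bpow β j ^ i) = 0 := by
  haveI : Fintype ↥(orbitSet N q) := (Set.toFinite _).fintype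
  have h := hc i hi
  rw [finsum_eq_sum_of_fintype] at h
  rw [← h]
  rw [← Finset.sum_fiberwise_of_maps_to
    (g := cls N q) (t := (Finset.univ : Finset ↥(orbitSet N q))) (fun x _ => Finset.mem_univ _)]
  refine Finset.sum_congr rfl fun l _ => ?_
  show _ = algebraMap F E (c l) * hEntry β ρ i (l : Set (ZMod N))
  rw [hEntry, fiber_eq hm hq l, finsum_mem_coe_finset, Finset.mul_sum]
  refine Finset.sum_congr rfl fun j hj => ?_
  rw [(Finset.mem_filter.mp hj).2]

end GoppaAux
namespace GoppaAux2

open Finset Polynomial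

variable {Ω : Type*} [Field Ω] {ι : Type*} [DecidableEq ι]

lemma key_vanish (S : Finset ι) (A a v : ι → Ω) (G : Polynomial Ω) (γ : Ω)
    (hroot : G.eval γ = 0)
    (hinv : ∀ j ∈ S, G.eval (A j) * v j = 1)
    (hne : ∀ j ∈ S, γ - A j ≠ 0)
    (hsyn : ∀ u, u < G.natDegree → ∑ j ∈ S, a j * v j * A j ^ u = 0) :
    ∑ j ∈ S, a j * ∏ k ∈ S.erase j, (γ - A k) = 0 := by
  set n := G.natDegree with hn
  have h1 : ∀ j ∈ S, a j * ∏ k ∈ S.erase j, (γ - A k)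
      = (∏ k ∈ S, (γ - A k)) * (a j * (γ - A j)⁻¹) := by
    intro j hj
    rw [← Finset.mul_prod_erase S _ hj]
    have h := hne j hj
    field_simp
  rw [Finset.sum_congr rfl h1, ← Finset.mul_sum]
  have h2 : ∀ j ∈ S, a j * (γ - A j)⁻¹
      = -∑ s ∈ Finset.range (n + 1), G.coeff s *
          ∑ u ∈ Finset.range s, γ ^ (s - 1 - u) * (a j * v j * A j ^ u) := by
    intro j hj
    have hW : G.eval (A j) = (∑ s ∈ Finset.range (n + 1), G.coeff s *
        ∑ u ∈ Finset.range s, A j ^ u * γ ^ (s - 1 - u)) * (A j - γ) := by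
      have e1 : G.eval (A j) = ∑ s ∈ Finset.range (n + 1), G.coeff s * A j ^ s :=
        eval_eq_sum_range _
      have e2 : (0 : Ω) = ∑ s ∈ Finset.range (n + 1), G.coeff s * γ ^ s := by
        rw [← hroot]; exact eval_eq_sum_range _
      have e3 : ∀ s ∈ Finset.range (n + 1),
          G.coeff s * A j ^ s - G.coeff s * γ ^ s
          = G.coeff s * (∑ u ∈ Finset.range s, A j ^ u * γ ^ (s - 1 - u)) * (A j - γ) := by
        intro s _
        rw [mul_assoc, geom_sum₂_mul, mul_sub]
      calc G.eval (A j) = G.eval (A j) - 0 := by rw [sub_zero]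
        _ = ∑ s ∈ Finset.range (n + 1), (G.coeff s * A j ^ s - G.coeff s * γ ^ s) := by
            rw [e1, e2, ← Finset.sum_sub_distrib]
        _ = ∑ s ∈ Finset.range (n + 1),
              G.coeff s * (∑ u ∈ Finset.range s, A j ^ u * γ ^ (s - 1 - u)) * (A j - γ) :=
            Finset.sum_congr rfl e3
        _ = _ := by rw [← Finset.sum_mul]
    apply mul_right_cancel₀ (hne j hj)
    rw [mul_assoc, inv_mul_cancel₀ (hne j hj), mul_one]
    have hW' : (∑ s ∈ Finset.range (n + 1), G.coeff s *
          ∑ u ∈ Finset.range s, γ ^ (s - 1 - u) * (a j * v j * A j ^ u))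
        = a j * v j * ∑ s ∈ Finset.range (n + 1), G.coeff s *
          ∑ u ∈ Finset.range s, A j ^ u * γ ^ (s - 1 - u) := by
      simp only [Finset.mul_sum]
      refine Finset.sum_congr rfl fun s _ => Finset.sum_congr rfl fun u _ => by ring
    rw [hW']
    have hstep : -(a j * v j * (∑ s ∈ Finset.range (n + 1), G.coeff s *
          ∑ u ∈ Finset.range s, A j ^ u * γ ^ (s - 1 - u))) * (γ - A j)
        = a j * v j * ((∑ s ∈ Finset.range (n + 1), G.coeff s *
          ∑ u ∈ Finset.range s, A j ^ u * γ ^ (s - 1 - u)) * (A j - γ)) := by ring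
    rw [hstep, ← hW]
    rw [show a j * v j * G.eval (A j) = a j * (G.eval (A j) * v j) from by ring]
    rw [hinv j hj, mul_one]
  rw [Finset.sum_congr rfl h2]
  rw [Finset.sum_neg_distrib]
  rw [Finset.sum_comm]
  have hz : ∀ s ∈ Finset.range (n + 1),
      ∑ j ∈ S, G.coeff s * ∑ u ∈ Finset.range s, γ ^ (s - 1 - u) * (a j * v j * A j ^ u)
        = 0 := by
    intro s hs
    have hs' : s ≤ n := Nat.lt_succ_iff.mp (Finset.mem_range.mp hs)
    simp only [Finset.mul_sum]
    rw [Finset.sum_comm]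
    refine Finset.sum_eq_zero fun u hu => ?_
    have hu' : u < n := lt_of_lt_of_le (Finset.mem_range.mp hu) hs'
    have : ∀ j ∈ S, G.coeff s * (γ ^ (s - 1 - u) * (a j * v j * A j ^ u))
        = (G.coeff s * γ ^ (s - 1 - u)) * (a j * v j * A j ^ u) := by
      intro j _; ring
    rw [Finset.sum_congr rfl this, ← Finset.mul_sum, hsyn u hu', mul_zero]
  rw [Finset.sum_congr rfl hz, Finset.sum_const_zero, neg_zero, mul_zero]

lemma Ppoly_eval (S : Finset ι) (a A : ι → Ω) (γ : Ω) :
    (∑ j ∈ S, C (a j) * ∏ k ∈ S.erase j, (X - C (A k))).eval γ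
      = ∑ j ∈ S, a j * ∏ k ∈ S.erase j, (γ - A k) := by
  rw [eval_finset_sum]
  refine Finset.sum_congr rfl fun j _ => ?_
  rw [eval_mul, eval_C, eval_prod]
  congr 1
  refine Finset.prod_congr rfl fun k _ => ?_
  rw [eval_sub, eval_X, eval_C]

lemma Ppoly_natDegree_le (S : Finset ι) (a A : ι → Ω) :
    (∑ j ∈ S, C (a j) * ∏ k ∈ S.erase j, (X - C (A k))).natDegree ≤ S.card - 1 := by
  refine natDegree_sum_le_of_forall_le S _ fun j hj => ?_
  refine (natDegree_C_mul_le _ _).trans ?_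
  refine (natDegree_prod_le _ _).trans ?_
  have : ∀ k ∈ S.erase j, (X - C (A k)).natDegree = 1 := fun k _ => natDegree_X_sub_C _
  rw [Finset.sum_congr rfl this, Finset.sum_const, smul_eq_mul, mul_one,
    Finset.card_erase_of_mem hj]

lemma Ppoly_ne_zero (S : Finset ι) (a A : ι → Ω) (hS : S.Nonempty)
    (ha : ∀ j ∈ S, a j ≠ 0) (hA : Set.InjOn A S) :
    (∑ j ∈ S, C (a j) * ∏ k ∈ S.erase j, (X - C (A k))) ≠ 0 := by
  obtain ⟨j0, hj0⟩ := hS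
  intro h
  have h0 := congrArg (eval (A j0)) h
  rw [Ppoly_eval, eval_zero] at h0
  rw [Finset.sum_eq_single j0 ?_ (fun h' => absurd hj0 h')] at h0
  · refine absurd h0 (mul_ne_zero (ha j0 hj0) ?_)
    rw [Finset.prod_ne_zero_iff]
    intro k hk
    have hk' := Finset.mem_of_mem_erase hk
    have hkj : k ≠ j0 := Finset.ne_of_mem_erase hk
    intro hzero
    exact hkj (hA hj0 hk' (sub_eq_zero.mp hzero)).symm
  · intro j hj hjj0
    have : j0 ∈ S.erase j := Finset.mem_erase.mpr ⟨Ne.symm hjj0, hj0⟩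
    rw [Finset.prod_eq_zero this (by rw [sub_self]), mul_zero]

end GoppaAux2
namespace GoppaAux3

open Polynomial IntermediateField

lemma nat_dvd_of_pow_sub_one_dvd {q : ℕ} (hq : 2 ≤ q) :
    ∀ b a : ℕ, (q ^ a - 1 ∣ q ^ b - 1) → a ∣ b := by
  intro b
  induction b using Nat.strong_induction_on with
  | _ b ih =>
    intro a h
    rcases Nat.eq_zero_or_pos a with rfl | ha
    · simp only [pow_zero, Nat.sub_self, Nat.zero_dvd] at h
      have h1 : 1 ≤ q ^ b := Nat.one_le_pow _ _ (by omega)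
      have hb : q ^ b = 1 := by omega
      have : b = 0 := by
        by_contra hb0
        have := Nat.one_lt_pow hb0 hq
        omega
      simp [this]
    rcases Nat.lt_or_ge b a with hba | hab
    · have hb0 : q ^ b - 1 = 0 := by
        rcases Nat.eq_zero_or_pos (q ^ b - 1) with h0 | hpos
        · exact h0
        · have hle := Nat.le_of_dvd hpos h
          have hlt : q ^ b < q ^ a := Nat.pow_lt_pow_right (by omega) hba
          omega
      have h1 : 1 ≤ q ^ b := Nat.one_le_pow _ _ (by omega)
      have hqb : q ^ b = 1 := by omega
      have hb : b = 0 := by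
        by_contra hb0
        have := Nat.one_lt_pow hb0 hq
        omega
      exact hb ▸ dvd_zero a
    · have hxy : q ^ (b - a) * q ^ a = q ^ b := by
        rw [← pow_add]; congr 1; omega
      have h1 : 1 ≤ q ^ a := Nat.one_le_pow _ _ (by omega)
      have h2 : 1 ≤ q ^ (b - a) := Nat.one_le_pow _ _ (by omega)
      have h3 : q ^ (b - a) * (q ^ a - 1) = q ^ (b - a) * q ^ a - q ^ (b - a) := by
        rw [Nat.mul_sub, mul_one]
      have hsplit : q ^ b - 1 = q ^ (b - a) * (q ^ a - 1) + (q ^ (b - a) - 1) := by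
        rw [h3, hxy]
        have hYX : q ^ (b - a) ≤ q ^ b := by
          rw [← hxy]; exact Nat.le_mul_of_pos_right _ (by omega)
        omega
      rw [hsplit] at h
      have h' : q ^ a - 1 ∣ q ^ (b - a) - 1 :=
        (Nat.dvd_add_right (dvd_mul_left _ _)).mp h
      have hlt : b - a < b := by omega
      have := ih (b - a) hlt a h'
      have hfin : a ∣ (b - a) + a := Dvd.dvd.add this dvd_rfl
      rwa [Nat.sub_add_cancel hab] at hfin

variable {F Ω : Type*} [Field F] [Fintype F] [Field Ω] [Algebra F Ω]

/-- The fixed field of the `s`-th power of the Frobenius, as an intermediate field. -/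
lemma exists_fixed_intermediateField (s : ℕ) :
    ∃ K : IntermediateField F Ω, ∀ x : Ω, x ∈ K ↔ x ^ Fintype.card F ^ s = x := by
  set q := Fintype.card F with hq
  have hq2 : 1 < q := Fintype.one_lt_card
  obtain ⟨p, hpi⟩ := CharP.exists F
  haveI := hpi
  haveI hp : Fact p.Prime := ⟨(CharP.char_is_prime F p)⟩
  haveI : CharP Ω p := charP_of_injective_algebraMap (algebraMap F Ω).injective p
  obtain ⟨f, _, hcard⟩ := FiniteField.card F p
  have hnn : q ^ s = p ^ ((f : ℕ) * s) := by rw [hq, hcard, ← pow_mul]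
  have hqs1 : 1 ≤ q ^ s := Nat.one_le_pow _ _ (by omega)
  refine ⟨{ carrier := {x : Ω | x ^ q ^ s = x}
            mul_mem' := ?_
            one_mem' := ?_
            add_mem' := ?_
            zero_mem' := ?_
            algebraMap_mem' := ?_
            inv_mem' := ?_ }, fun x => Iff.rfl⟩
  · intro x y hx hy
    show (x * y) ^ q ^ s = x * y
    rw [mul_pow]
    rw [Set.mem_setOf_eq] at hx hy
    rw [hx, hy]
  · show (1 : Ω) ^ q ^ s = 1
    rw [one_pow]
  · intro x y hx hy
    show (x + y) ^ q ^ s = x + y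
    rw [Set.mem_setOf_eq] at hx hy
    rw [hnn] at hx hy ⊢
    rw [add_pow_char_pow, hx, hy]
  · show (0 : Ω) ^ q ^ s = 0
    exact zero_pow (by omega)
  · intro x
    show algebraMap F Ω x ^ q ^ s = algebraMap F Ω x
    rw [← map_pow, FiniteField.pow_card_pow]
  · intro x hx
    show x⁻¹ ^ q ^ s = x⁻¹
    rw [Set.mem_setOf_eq] at hx
    rw [inv_pow, hx]

lemma isIntegral_of_pow_card (s : ℕ) (hs : 0 < s) {γ : Ω}
    (hγ : γ ^ Fintype.card F ^ s = γ) : IsIntegral F γ := by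
  set q := Fintype.card F with hq
  have hq2 : 1 < q := Fintype.one_lt_card
  have h2 : 2 ≤ q ^ s := by
    calc 2 ≤ q := hq2
    _ = q ^ 1 := (pow_one q).symm
    _ ≤ q ^ s := Nat.pow_le_pow_right (by omega) hs
  refine ⟨X ^ q ^ s - X, ?_, ?_⟩
  · apply monic_X_pow_sub
    rw [degree_X]
    exact_mod_cast Nat.one_lt_cast.mpr (by omega : 1 < q ^ s)
  · show eval₂ (algebraMap F Ω) γ (X ^ q ^ s - X) = 0
    rw [eval₂_sub, eval₂_pow, eval₂_X, hγ, sub_self]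

lemma pow_card_pow_natDegree_minpoly {γ : Ω} (hint : IsIntegral F γ) :
    γ ^ Fintype.card F ^ (minpoly F γ).natDegree = γ := by
  haveI : FiniteDimensional F F⟮γ⟯ := adjoin.finiteDimensional hint
  haveI : Finite F⟮γ⟯ := Module.finite_of_finite F  -- maybe wrong name
  haveI : Fintype F⟮γ⟯ := Fintype.ofFinite _
  have hcard : Fintype.card F⟮γ⟯ = Fintype.card F ^ (minpoly F γ).natDegree := by
    rw [Module.card_eq_pow_finrank (K := F) (V := F⟮γ⟯), adjoin.finrank hint]
  have hfix := FiniteField.pow_card (AdjoinSimple.gen F γ)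
  have := congrArg (algebraMap F⟮γ⟯ Ω) hfix
  rw [map_pow, AdjoinSimple.algebraMap_gen] at this
  rw [← hcard]
  exact this

lemma natDegree_minpoly_dvd {γ : Ω} {s : ℕ} (hs : 0 < s)
    (hγ : γ ^ Fintype.card F ^ s = γ) :
    (minpoly F γ).natDegree ∣ s := by
  set q := Fintype.card F with hq
  have hq2 : 1 < q := Fintype.one_lt_card
  have hint : IsIntegral F γ := isIntegral_of_pow_card s hs hγ
  haveI : FiniteDimensional F F⟮γ⟯ := adjoin.finiteDimensional hint
  haveI : Finite F⟮γ⟯ := Module.finite_of_finite F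
  haveI : Fintype F⟮γ⟯ := Fintype.ofFinite _
  set δ := (minpoly F γ).natDegree with hδ
  have hcard : Fintype.card F⟮γ⟯ = q ^ δ := by
    rw [Module.card_eq_pow_finrank (K := F) (V := F⟮γ⟯), adjoin.finrank hint]
  -- the fixed field
  obtain ⟨K, hK⟩ := exists_fixed_intermediateField (F := F) (Ω := Ω) s
  have hle : F⟮γ⟯ ≤ K := by
    rw [adjoin_le_iff]
    intro x hx
    rw [Set.mem_singleton_iff] at hx
    rw [hx]
    exact (hK γ).mpr hγ
  -- a generator of the units
  haveI : IsCyclic (F⟮γ⟯)ˣ := inferInstance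
  obtain ⟨ζ, hζ⟩ := IsCyclic.exists_generator (α := (F⟮γ⟯)ˣ)
  have hord : orderOf ζ = q ^ δ - 1 := by
    classical
    rw [orderOf_eq_card_of_forall_mem_zpowers hζ, Nat.card_eq_fintype_card,
      Fintype.card_units, hcard]
  have hζΩ : ((ζ : F⟮γ⟯) : Ω) ^ q ^ s = ((ζ : F⟮γ⟯) : Ω) := by
    have hmem : ((ζ : F⟮γ⟯) : Ω) ∈ K := hle (ζ : F⟮γ⟯).2
    exact (hK _).mp hmem
  have hζK : (ζ : F⟮γ⟯) ^ q ^ s = (ζ : F⟮γ⟯) := by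
    apply Subtype.ext
    push_cast
    exact hζΩ
  have hζne : (ζ : F⟮γ⟯) ≠ 0 := Units.ne_zero ζ
  have hqs1 : 1 ≤ q ^ s := Nat.one_le_pow _ _ (by omega)
  have hpow1 : (ζ : F⟮γ⟯) ^ (q ^ s - 1) = 1 := by
    have : (ζ : F⟮γ⟯) ^ (q ^ s - 1) * (ζ : F⟮γ⟯) = 1 * (ζ : F⟮γ⟯) := by
      rw [one_mul, ← pow_succ]
      rw [Nat.sub_add_cancel hqs1]
      exact hζK
    exact mul_right_cancel₀ hζne this
  have hdvd : orderOf (ζ : F⟮γ⟯) ∣ q ^ s - 1 := orderOf_dvd_of_pow_eq_one hpow1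
  rw [orderOf_units, hord] at hdvd
  exact nat_dvd_of_pow_sub_one_dvd hq2 s δ hdvd

end GoppaAux3
namespace GoppaAux4

open Polynomial
open scoped Classical

variable {Ω : Type*} [Field Ω]

lemma degree_X_pow_sub_X {n : ℕ} (hn : 2 ≤ n) :
    (X ^ n - X : Polynomial Ω).degree = n := by
  rw [degree_sub_eq_left_of_degree_lt, degree_X_pow]
  rw [degree_X, degree_X_pow]
  exact_mod_cast hn

lemma natDegree_X_pow_sub_X {n : ℕ} (hn : 2 ≤ n) :
    (X ^ n - X : Polynomial Ω).natDegree = n :=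
  natDegree_eq_of_degree_eq_some (degree_X_pow_sub_X hn)

lemma X_pow_sub_X_ne_zero {n : ℕ} (hn : 2 ≤ n) : (X ^ n - X : Polynomial Ω) ≠ 0 := by
  intro h
  have := degree_X_pow_sub_X (Ω := Ω) hn
  rw [h, degree_zero] at this
  exact absurd this (by simp)

/-- The roots of `X ^ n - X` as a finset. -/
def rootsF (Ω : Type*) [Field Ω] (n : ℕ) : Finset Ω :=
  (X ^ n - X : Polynomial Ω).roots.toFinset

lemma mem_rootsF {n : ℕ} (hn : 2 ≤ n) {x : Ω} :
    x ∈ rootsF Ω n ↔ x ^ n = x := by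
  rw [rootsF, Multiset.mem_toFinset, mem_roots', IsRoot.def, eval_sub, eval_pow, eval_X]
  constructor
  · intro h
    have h2 := sub_eq_zero.mp h.2
    exact h2
  · intro h
    exact ⟨X_pow_sub_X_ne_zero hn, by rw [h, sub_self]⟩

lemma card_rootsF_le {n : ℕ} (hn : 2 ≤ n) : (rootsF Ω n).card ≤ n := by
  calc (rootsF Ω n).card ≤ Multiset.card (X ^ n - X : Polynomial Ω).roots :=
        Multiset.toFinset_card_le _
    _ ≤ (X ^ n - X : Polynomial Ω).natDegree := card_roots' _
    _ = n := natDegree_X_pow_sub_X hn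

lemma card_rootsF_eq [IsAlgClosed Ω] {p n : ℕ} [CharP Ω p] (hpn : p ∣ n) (hn : 2 ≤ n) :
    (rootsF Ω n).card = n := by
  have hsep : (X ^ n - X : Polynomial Ω).Separable := by
    have hder : derivative (X ^ n - X : Polynomial Ω) = -1 := by
      rw [derivative_sub, derivative_X_pow, derivative_X]
      have : ((n : Ω)) = 0 := (CharP.cast_eq_zero_iff Ω p n).mpr hpn
      rw [this, map_zero, zero_mul, zero_sub]
    rw [Polynomial.Separable, hder]
    exact IsCoprime.neg_right isCoprime_one_right
  have hnodup := nodup_roots hsep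
  rw [rootsF, Multiset.toFinset_card_eq_card_iff_nodup.mpr hnodup]
  rw [splits_iff_card_roots.mp (IsAlgClosed.splits _), natDegree_X_pow_sub_X hn]

lemma geom_bound {q : ℕ} (hq : 2 ≤ q) (K : ℕ) :
    ∑ s ∈ Finset.Icc 1 K, q ^ s ≤ q ^ (K + 1) := by
  induction K with
  | zero => simp
  | succ K ih =>
    rw [Finset.sum_Icc_succ_top (by omega : 1 ≤ K + 1)]
    have h1 : q ^ (K + 1) + q ^ (K + 1) ≤ q ^ (K + 1 + 1) := by
      have h2 : 2 * q ^ (K + 1) ≤ q * q ^ (K + 1) :=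
        Nat.mul_le_mul_right _ hq
      calc q ^ (K + 1) + q ^ (K + 1) = 2 * q ^ (K + 1) := by ring
        _ ≤ q * q ^ (K + 1) := h2
        _ = q ^ (K + 1 + 1) := by ring
    omega

end GoppaAux4

open GoppaAux GoppaAux2 GoppaAux3 GoppaAux4 IntermediateField in
/-- If `t > 1` is coprime to `m` and `∑_{e=1}^d (e−1)|B_{e,L}| < q^t − q^{t/2+1}`, then
there is a monic irreducible `g` of degree `t` over `F` with no roots in `GF(q^m)` lying
outside `G(d,t,L)`; in particular every nonzero codeword of `C(g⁻¹,t)` has degree `> d`. -/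
theorem exists_good_polynomial (q m : ℕ) (hm : 0 < m) (hqm : Nat.Coprime q m)
    (F E : Type*) [Field F] [Field E] [Fintype F] [Fintype E] [Algebra F E]
    (hF : Fintype.card F = q) (hE : Fintype.card E = q ^ m)
    (β : E) (hβ : orderOf β = q ^ m - 1) (t : ℕ) (ht : 1 < t) (htm : Nat.Coprime t m)
    (d : ℕ) (hd : 0 < d)
    (hsum : ∑ e ∈ Finset.Icc 1 d,
        ((e : ℝ) - 1) * ((Bset F (q ^ m - 1) q e).ncard : ℝ) <
      (q : ℝ) ^ t - (q : ℝ) ^ ((t : ℝ) / 2 + 1)) :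
    ∃ g : Polynomial F, g.Monic ∧ Irreducible g ∧ g.natDegree = t ∧
      (∀ x : E, Polynomial.aeval x g ≠ 0) ∧
      g ∉ ⋃ e ∈ Finset.Icc 1 d, Gset F E (q ^ m - 1) q β e t ∧
      ∀ ginv : Polynomial F, ginv.degree < ((q ^ m - 1 : ℕ) : WithBot ℕ) →
        ((X : Polynomial F) ^ (q ^ m - 1) - 1 ∣ g * ginv - 1) →
        ∀ c ∈ codeSet F E (q ^ m - 1) q β ginv t, c ≠ 0 → d < wdeg c := by
  classical
  have hq2 : 1 < q := by rw [← hF]; exact Fintype.one_lt_card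
  have hqm2 : 2 ≤ q ^ m := by
    calc 2 ≤ q := hq2
      _ = q ^ 1 := (pow_one q).symm
      _ ≤ q ^ m := Nat.pow_le_pow_right (by omega) hm
  set N := q ^ m - 1 with hN
  haveI : NeZero N := ⟨by omega⟩
  have hqZ : (q : ZMod N) ^ m = 1 := by
    have h1 : ((q ^ m : ℕ) : ZMod N) = ((N + 1 : ℕ) : ZMod N) := by congr 1; omega
    push_cast at h1
    rw [ZMod.natCast_self, zero_add] at h1
    exact h1
  haveI : Fintype ↥(orbitSet N q) := (Set.toFinite _).fintype
  -- basic facts about β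
  have hβN : β ^ N = 1 := by rw [← hβ]; exact pow_orderOf_eq_one β
  have hbpowN : ∀ j : ZMod N, bpow β j ^ N = 1 := by
    intro j; rw [bpow, ← pow_mul, mul_comm, pow_mul, hβN, one_pow]
  have hα_inj : Function.Injective (fun j : ZMod N => bpow β j) := by
    obtain ⟨u, hu⟩ := IsUnit.of_pow_eq_one hβN (by omega)
    intro j k hjk
    simp only [bpow] at hjk
    have hjk' : u ^ j.val = u ^ k.val := by
      apply Units.ext
      rw [Units.val_pow_eq_pow_val, Units.val_pow_eq_pow_val, hu]
      exact hjk
    have hmod := pow_eq_pow_iff_modEq.mp hjk'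
    have hou : orderOf u = N := by rw [← orderOf_units, hu, hβ]
    rw [hou] at hmod
    have hmod' : j.val % N = k.val % N := hmod
    rw [Nat.mod_eq_of_lt (ZMod.val_lt j), Nat.mod_eq_of_lt (ZMod.val_lt k)] at hmod'
    exact ZMod.val_injective N hmod'
  -- the algebraic closure
  set Ω := AlgebraicClosure E with hΩ
  obtain ⟨p, hpI⟩ := CharP.exists F
  haveI := hpI
  haveI hpF : Fact p.Prime := ⟨CharP.char_is_prime F p⟩
  haveI : CharP Ω p := charP_of_injective_algebraMap (algebraMap F Ω).injective p
  obtain ⟨f, -, hcardF⟩ := FiniteField.card F p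
  have hpq : p ∣ q := by
    rw [← hF, hcardF]
    exact dvd_pow_self p f.pos.ne'
  have hpqt : p ∣ q ^ t := hpq.trans (dvd_pow_self q (by omega))
  have h2qs : ∀ s : ℕ, 1 ≤ s → 2 ≤ q ^ s := by
    intro s hs
    calc 2 ≤ q := hq2
      _ = q ^ 1 := (pow_one q).symm
      _ ≤ q ^ s := Nat.pow_le_pow_right (by omega) hs
  have h2qt : 2 ≤ q ^ t := h2qs t (by omega)
  set A : ZMod N → Ω := fun j => algebraMap E Ω (bpow β j) with hA
  have hA_inj : Function.Injective A := fun j k h =>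
    hα_inj ((algebraMap E Ω).injective h)
  set Pp : (↥(orbitSet N q) → F) → Polynomial Ω := fun r =>
    ∑ j ∈ Supp r, Polynomial.C (algebraMap F Ω (r (cls N q j))) *
      ∏ k ∈ (Supp r).erase j, (Polynomial.X - Polynomial.C (A k)) with hPp
  set Tt := rootsF Ω (q ^ t) with hTt
  set BadDeg := (t.divisors.erase t).biUnion (fun s => rootsF Ω (q ^ s)) with hBD
  set BadRoot := (Finset.Icc 1 d).biUnion (fun e =>
    ((Set.toFinite (Bset F N q e)).toFinset).biUnion
      (fun r => (Pp r).roots.toFinset)) with hBR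
  -- cardinality bounds
  have hTtcard : Tt.card = q ^ t := by rw [hTt]; exact card_rootsF_eq hpqt h2qt
  have hBDcard : (BadDeg.card : ℝ) ≤ (q : ℝ) ^ ((t : ℝ) / 2 + 1) := by
    have h1 : BadDeg.card ≤ ∑ s ∈ t.divisors.erase t, (rootsF Ω (q ^ s)).card := by
      rw [hBD]; exact Finset.card_biUnion_le
    have h2 : ∑ s ∈ t.divisors.erase t, (rootsF Ω (q ^ s)).card
        ≤ ∑ s ∈ t.divisors.erase t, q ^ s :=
      Finset.sum_le_sum fun s hs => card_rootsF_le
        (h2qs s (Nat.pos_of_mem_divisors (Finset.mem_of_mem_erase hs)))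
    have hsub : t.divisors.erase t ⊆ Finset.Icc 1 (t / 2) := by
      intro s hs
      have hsne := Finset.ne_of_mem_erase hs
      have hsmem := Finset.mem_of_mem_erase hs
      obtain ⟨hdvd, ht0⟩ := Nat.mem_divisors.mp hsmem
      have hs1 : 1 ≤ s := Nat.pos_of_mem_divisors hsmem
      obtain ⟨k, hk⟩ := hdvd
      have hk2 : 2 ≤ k := by
        by_contra hlt
        push_neg at hlt
        interval_cases k
        · rw [mul_zero] at hk; exact ht0 hk
        · rw [mul_one] at hk; exact hsne hk.symm
      have hst : s * 2 ≤ t := by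
        calc s * 2 ≤ s * k := Nat.mul_le_mul_left s hk2
          _ = t := hk.symm
      exact Finset.mem_Icc.mpr ⟨hs1, (Nat.le_div_iff_mul_le (by omega)).mpr hst⟩
    have h3 : ∑ s ∈ t.divisors.erase t, q ^ s ≤ ∑ s ∈ Finset.Icc 1 (t / 2), q ^ s :=
      Finset.sum_le_sum_of_subset hsub
    have h4 := geom_bound (q := q) (by omega) (t / 2)
    have h5 : (BadDeg.card : ℝ) ≤ ((q ^ (t / 2 + 1) : ℕ) : ℝ) := by
      exact_mod_cast le_trans h1 (le_trans h2 (le_trans h3 h4))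
    refine h5.trans ?_
    rw [Nat.cast_pow]
    rw [← Real.rpow_natCast (q : ℝ) (t / 2 + 1)]
    apply Real.rpow_le_rpow_of_exponent_le (by exact_mod_cast hq2.le)
    push_cast
    have hdivle := Nat.cast_div_le (α := ℝ) (m := t) (n := 2)
    push_cast at hdivle
    linarith
  have hBRcard : (BadRoot.card : ℝ)
      ≤ ∑ e ∈ Finset.Icc 1 d, ((e : ℝ) - 1) * ((Bset F N q e).ncard : ℝ) := by
    have h1 : BadRoot.card ≤ ∑ e ∈ Finset.Icc 1 d,
        (((Set.toFinite (Bset F N q e)).toFinset).biUnion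
          (fun r => (Pp r).roots.toFinset)).card := by
      rw [hBR]; exact Finset.card_biUnion_le
    have h2 : ∀ e ∈ Finset.Icc 1 d,
        ((((Set.toFinite (Bset F N q e)).toFinset).biUnion
          (fun r => (Pp r).roots.toFinset)).card : ℝ)
        ≤ ((e : ℝ) - 1) * ((Bset F N q e).ncard : ℝ) := by
      intro e he
      have he1 : 1 ≤ e := (Finset.mem_Icc.mp he).1
      have hinner : ∀ r ∈ (Set.toFinite (Bset F N q e)).toFinset,
          ((Pp r).roots.toFinset).card ≤ e - 1 := by
        intro r hr
        have hrB : wdeg r = e := ((Set.toFinite (Bset F N q e)).mem_toFinset).mp hr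
        calc ((Pp r).roots.toFinset).card ≤ Multiset.card (Pp r).roots :=
              Multiset.toFinset_card_le _
          _ ≤ (Pp r).natDegree := Polynomial.card_roots' _
          _ ≤ (Supp r).card - 1 := by
              rw [hPp]; exact Ppoly_natDegree_le _ _ _
          _ = e - 1 := by rw [card_Supp hm hqZ r, hrB]
      have hcardb : (((Set.toFinite (Bset F N q e)).toFinset).biUnion
          (fun r => (Pp r).roots.toFinset)).card
          ≤ ((Set.toFinite (Bset F N q e)).toFinset).card * (e - 1) := by
        refine Finset.card_biUnion_le.trans ?_
        calc ∑ r ∈ (Set.toFinite (Bset F N q e)).toFinset, ((Pp r).roots.toFinset).card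
            ≤ ∑ _r ∈ (Set.toFinite (Bset F N q e)).toFinset, (e - 1) :=
              Finset.sum_le_sum hinner
          _ = ((Set.toFinite (Bset F N q e)).toFinset).card * (e - 1) := by
              rw [Finset.sum_const, smul_eq_mul]
      have hncard : ((Bset F N q e).ncard : ℝ)
          = (((Set.toFinite (Bset F N q e)).toFinset).card : ℝ) := by
        rw [Set.ncard_eq_toFinset_card _ (Set.toFinite _)]
      calc ((((Set.toFinite (Bset F N q e)).toFinset).biUnion
            (fun r => (Pp r).roots.toFinset)).card : ℝ)
          ≤ ((((Set.toFinite (Bset F N q e)).toFinset).card * (e - 1) : ℕ) : ℝ) := by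
            exact_mod_cast hcardb
        _ = ((e : ℝ) - 1) * ((Bset F N q e).ncard : ℝ) := by
            rw [Nat.cast_mul, Nat.cast_sub he1, Nat.cast_one, hncard]
            ring
    calc (BadRoot.card : ℝ) ≤ ∑ e ∈ Finset.Icc 1 d,
          ((((Set.toFinite (Bset F N q e)).toFinset).biUnion
            (fun r => (Pp r).roots.toFinset)).card : ℝ) := by exact_mod_cast h1
      _ ≤ ∑ e ∈ Finset.Icc 1 d, ((e : ℝ) - 1) * ((Bset F N q e).ncard : ℝ) :=
          Finset.sum_le_sum h2
  -- find a good γ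
  have hlt : ((BadDeg ∪ BadRoot).card : ℝ) < (Tt.card : ℝ) := by
    calc ((BadDeg ∪ BadRoot).card : ℝ) ≤ (BadDeg.card : ℝ) + (BadRoot.card : ℝ) := by
          exact_mod_cast Finset.card_union_le _ _
      _ ≤ (q : ℝ) ^ ((t : ℝ) / 2 + 1)
          + ∑ e ∈ Finset.Icc 1 d, ((e : ℝ) - 1) * ((Bset F N q e).ncard : ℝ) :=
          add_le_add hBDcard hBRcard
      _ < (q : ℝ) ^ t := by linarith
      _ = (Tt.card : ℝ) := by rw [hTtcard]; push_cast; ring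
  have hnsub : ¬ Tt ⊆ BadDeg ∪ BadRoot := by
    intro hsubs
    exact absurd (Nat.cast_le.mpr (Finset.card_le_card hsubs)) (not_le.mpr hlt)
  obtain ⟨γ, hγT, hγBad⟩ := Finset.not_subset.mp hnsub
  have hγBD : γ ∉ BadDeg := fun h => hγBad (Finset.mem_union_left _ h)
  have hγBR : γ ∉ BadRoot := fun h => hγBad (Finset.mem_union_right _ h)
  rw [hTt] at hγT
  have hγfix : γ ^ q ^ t = γ := (mem_rootsF h2qt).mp hγT
  have hγfix' : γ ^ Fintype.card F ^ t = γ := by rw [hF]; exact hγfix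
  have hint : IsIntegral F γ := isIntegral_of_pow_card t (by omega) hγfix'
  set g := minpoly F γ with hg
  have hmonic : g.Monic := minpoly.monic hint
  have hirr : Irreducible g := minpoly.irreducible hint
  have hdvdt : g.natDegree ∣ t := natDegree_minpoly_dvd (by omega) hγfix'
  have hdegt : g.natDegree = t := by
    by_contra hne
    have h1 : g.natDegree ∈ t.divisors.erase t :=
      Finset.mem_erase.mpr ⟨hne, Nat.mem_divisors.mpr ⟨hdvdt, by omega⟩⟩
    have h2 : γ ∈ rootsF Ω (q ^ g.natDegree) := by
      rw [mem_rootsF (h2qs _ (minpoly.natDegree_pos hint))]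
      have hfix := pow_card_pow_natDegree_minpoly (F := F) hint
      rw [hF] at hfix
      exact hfix
    exact hγBD (by rw [hBD]; exact Finset.mem_biUnion.mpr ⟨g.natDegree, h1, h2⟩)
  haveI : FiniteDimensional F E := Module.Finite.of_finite (R := F)
  have hfrk : Module.finrank F E = m := by
    have hc := Module.card_eq_pow_finrank (K := F) (V := E)
    rw [hF, hE] at hc
    exact (Nat.pow_right_injective hq2 hc.symm)
  have hnoroot : ∀ x : E, Polynomial.aeval x g ≠ 0 := by
    intro x hx
    have hxint : IsIntegral F x := IsIntegral.of_finite F x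
    have hdvd' : minpoly F x ∣ g := minpoly.dvd F x hx
    have hassoc : Associated (minpoly F x) g :=
      (minpoly.irreducible hxint).associated_of_dvd hirr hdvd'
    have heq : minpoly F x = g :=
      Polynomial.eq_of_monic_of_associated (minpoly.monic hxint) hmonic hassoc
    haveI : FiniteDimensional F F⟮x⟯ := IntermediateField.adjoin.finiteDimensional hxint
    have hfr : Module.finrank F F⟮x⟯ = t := by
      rw [IntermediateField.adjoin.finrank hxint, heq, hdegt]
    have hdd : t ∣ m :=
      ⟨Module.finrank F⟮x⟯ E, by
        rw [← hfrk, ← hfr]; exact (Module.finrank_mul_finrank F F⟮x⟯ E).symm⟩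
    have ht1 : t ∣ 1 := htm ▸ Nat.dvd_gcd dvd_rfl hdd
    rw [Nat.dvd_one] at ht1
    omega
  -- the evaluation of G at the points A j
  set G : Polynomial Ω := g.map (algebraMap F Ω) with hG
  have hGdeg : G.natDegree = t := by rw [hG, Polynomial.natDegree_map, hdegt]
  have hGroot : G.eval γ = 0 := by
    rw [hG, Polynomial.eval_map, ← Polynomial.aeval_def, hg, minpoly.aeval]
  have hGA : ∀ j : ZMod N,
      G.eval (A j) = algebraMap E Ω (Polynomial.aeval (bpow β j) g) := by
    intro j
    rw [hG, Polynomial.eval_map, ← Polynomial.aeval_def]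
    show Polynomial.aeval (algebraMap E Ω (bpow β j)) g = _
    rw [Polynomial.aeval_algebraMap_apply]
  -- the key step: no bad codeword can exist for g
  have hmain : ∀ e ∈ Finset.Icc 1 d, g ∉ Gset F E N q β e t := by
    intro e he hgG
    obtain ⟨-, -, -, -, ginv, -, hdvd, r, hrB, hrC⟩ := hgG
    have hrB' : wdeg r = e := hrB
    have hecard : (Supp r).card = e := by rw [card_Supp hm hqZ r, hrB']
    have he1 : 1 ≤ e := (Finset.mem_Icc.mp he).1
    have hSne : (Supp r).Nonempty := Finset.card_pos.mp (by omega)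
    have hinvE : ∀ j : ZMod N,
        Polynomial.aeval (bpow β j) g * Polynomial.aeval (bpow β j) ginv = 1 := by
      intro j
      obtain ⟨w, hw⟩ := hdvd
      have hcong := congrArg (Polynomial.aeval (bpow β j)) hw
      simp only [map_mul, map_sub, map_one, map_pow, Polynomial.aeval_X,
        hbpowN j, sub_self, zero_mul] at hcong
      exact sub_eq_zero.mp hcong
    have hinvΩ : ∀ j ∈ Supp r,
        G.eval (A j) * (Polynomial.aeval (A j) ginv : Ω) = 1 := by
      intro j _
      have h2 : (Polynomial.aeval (A j) ginv : Ω)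
          = algebraMap E Ω (Polynomial.aeval (bpow β j) ginv) := by
        show Polynomial.aeval (algebraMap E Ω (bpow β j)) ginv = _
        rw [Polynomial.aeval_algebraMap_apply]
      rw [hGA j, h2, ← map_mul, hinvE j, map_one]
    have hneΩ : ∀ j ∈ Supp r, γ - A j ≠ 0 := by
      intro j _
      rw [sub_ne_zero]
      intro hEq
      have h1 := hGA j
      rw [← hEq, hGroot] at h1
      exact hnoroot (bpow β j) ((algebraMap E Ω).injective (by rw [map_zero, ← h1]))
    have hsynΩ : ∀ u, u < G.natDegree →
        ∑ j ∈ Supp r, (algebraMap F Ω (r (cls N q j)))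
          * (Polynomial.aeval (A j) ginv) * A j ^ u = 0 := by
      intro u hu
      rw [hGdeg] at hu
      have hE0 := syndrome hm hqZ β ginv t hrC hu
      have hΩ0 := congrArg (algebraMap E Ω) hE0
      rw [map_sum, map_zero] at hΩ0
      have hzero : ∀ j ∈ Finset.univ, j ∉ Supp r →
          (algebraMap F Ω (r (cls N q j)))
            * (Polynomial.aeval (A j) ginv) * A j ^ u = 0 := by
        intro j _ hj
        have hr0 : r (cls N q j) = 0 := by
          by_contra hcn
          exact hj (Finset.mem_filter.mpr ⟨Finset.mem_univ _, hcn⟩)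
        rw [hr0, map_zero, zero_mul, zero_mul]
      rw [Finset.sum_subset (Finset.subset_univ (Supp r)) hzero, ← hΩ0]
      refine Finset.sum_congr rfl fun j _ => ?_
      rw [map_mul, map_mul, map_pow]
      rw [IsScalarTower.algebraMap_apply F E Ω (r (cls N q j))]
      have h2 : (Polynomial.aeval (A j) ginv : Ω)
          = algebraMap E Ω (Polynomial.aeval (bpow β j) ginv) := by
        show Polynomial.aeval (algebraMap E Ω (bpow β j)) ginv = _
        rw [Polynomial.aeval_algebraMap_apply]
      rw [h2]
      show _ = algebraMap E Ω (algebraMap F E (r (cls N q j)))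
        * (algebraMap E Ω (Polynomial.aeval (bpow β j) ginv)
          * algebraMap E Ω (bpow β j) ^ u)
      ring
    have hkey := key_vanish (Supp r) A
      (fun j => algebraMap F Ω (r (cls N q j)))
      (fun j => Polynomial.aeval (A j) ginv) G γ hGroot hinvΩ hneΩ hsynΩ
    have hPzero : (Pp r).eval γ = 0 := by
      rw [hPp]
      show (∑ j ∈ Supp r, Polynomial.C (algebraMap F Ω (r (cls N q j))) *
        ∏ k ∈ (Supp r).erase j, (Polynomial.X - Polynomial.C (A k))).eval γ = 0
      rw [Ppoly_eval]
      exact hkey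
    have hPne : Pp r ≠ 0 := by
      rw [hPp]
      show (∑ j ∈ Supp r, Polynomial.C (algebraMap F Ω (r (cls N q j))) *
        ∏ k ∈ (Supp r).erase j, (Polynomial.X - Polynomial.C (A k))) ≠ 0
      refine Ppoly_ne_zero _ _ _ hSne ?_ ?_
      · intro j hj
        have hrne : r (cls N q j) ≠ 0 := (Finset.mem_filter.mp hj).2
        exact fun h0 => hrne ((algebraMap F Ω).injective (by rw [h0, map_zero]))
      · exact fun x _ y _ h => hA_inj h
    refine hγBR ?_
    rw [hBR]
    refine Finset.mem_biUnion.mpr ⟨e, he, Finset.mem_biUnion.mpr ⟨r, ?_, ?_⟩⟩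
    · exact (Set.Finite.mem_toFinset _).mpr hrB
    · rw [Multiset.mem_toFinset, Polynomial.mem_roots']
      exact ⟨hPne, hPzero⟩
  refine ⟨g, hmonic, hirr, hdegt, hnoroot, ?_, ?_⟩
  · intro hgU
    rw [Set.mem_iUnion₂] at hgU
    obtain ⟨e, he, hgG⟩ := hgU
    exact hmain e he hgG
  · intro ginv hgdeg hgdvd c hc hc0
    by_contra hled
    push_neg at hled
    have hSne : (Supp c).Nonempty := by
      obtain ⟨l, hl⟩ := Function.ne_iff.mp hc0
      obtain ⟨j0, hj0⟩ := l.2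
      have hcls : cls N q j0 = l := Subtype.ext hj0.symm
      refine ⟨j0, Finset.mem_filter.mpr ⟨Finset.mem_univ _, ?_⟩⟩
      rw [hcls]
      simpa using hl
    have he1 : 1 ≤ wdeg c := by
      rw [← card_Supp hm hqZ c]
      exact Finset.card_pos.mpr hSne
    refine hmain (wdeg c) (Finset.mem_Icc.mpr ⟨he1, hled⟩) ?_
    exact ⟨hmonic, hirr, hdegt, hnoroot, ginv, hgdeg, hgdvd, c, rfl, hc⟩
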